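/- Let p* ∈ (0, 1), L > 0, δ_MIN > 0, t_1 > 0, V_MAX ≥ L(1 − p*)/(p*·δ_MIN), and let k_0 be a positive integer. Let (Δ_i) be a sequence of positive reals with Δ_i ≤ Δ_MAX for some constant Δ_MAX and Δ_i = L/V_MAX for all i ≥ k_0, and let (δ_j) be a sequence of reals with δ_j ≥ δ_MIN for all j. Define p_k = (Σ_{i=1}^k Δ_i)/(t_1 + Σ_{i=1}^k (Δ_i + δ_i)). Then limsup_{k→∞} p_k ≤ p*. -/

import Mathlib

open Filter

/-- If the crossing times `Δ_i` are positive, bounded by `Δ_MAX`,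
and equal to `L/V_MAX` from index `k₀` onward, with `V_MAX ≥ L(1−p*)/(p*·δ_MIN)`
and gaps `δ_j ≥ δ_MIN`, then the coverage ratios
`p_k = (Σ_{i<k} Δ_i)/(t₁ + Σ_{i<k} (Δ_i + δ_i))` satisfy `limsup p_k ≤ p*`. -/
theorem limsup_coverage_le_of_eventually_max_speed
    (pstar L δMIN t1 VMAX ΔMAX : ℝ) (k0 : ℕ)
    (hp : pstar ∈ Set.Ioo (0 : ℝ) 1) (hL : 0 < L) (hδMIN : 0 < δMIN)
    (ht1 : 0 < t1) (hVpos : 0 < VMAX) (hk0 : 0 < k0)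
    (hV : VMAX ≥ L * (1 - pstar) / (pstar * δMIN))
    (Δ : ℕ → ℝ) (hΔpos : ∀ i, 0 < Δ i) (hΔle : ∀ i, Δ i ≤ ΔMAX)
    (hΔeq : ∀ i, k0 ≤ i → Δ i = L / VMAX)
    (δ : ℕ → ℝ) (hδ : ∀ j, δMIN ≤ δ j) :
    limsup
        (fun k : ℕ =>
          (∑ i ∈ Finset.range k, Δ i) /
            (t1 + ∑ i ∈ Finset.range k, (Δ i + δ i)))
        atTop ≤ pstar := by
  obtain ⟨hp0, hp1⟩ := hp
  have hDpos0 : 0 < L / VMAX := div_pos hL hVpos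
  set D : ℝ := L / VMAX with hD
  set E : ℝ := D + δMIN with hE
  have hEpos : 0 < E := by positivity
  have hΔMAX : 0 < ΔMAX := lt_of_lt_of_le (hΔpos 0) (hΔle 0)
  -- the limit bound
  have hℓ : D / E ≤ pstar := by
    rw [div_le_iff₀ hEpos]
    have h1 : 0 < pstar * δMIN := by positivity
    have h2 : L * (1 - pstar) ≤ VMAX * (pstar * δMIN) := by
      rw [ge_iff_le, div_le_iff₀ h1] at hV; linarith
    have hx : D * VMAX = L := by rw [hD]; exact div_mul_cancel₀ L hVpos.ne'
    have h3 : L ≤ pstar * L + pstar * δMIN * VMAX := by nlinarith [h2]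
    have h5 : pstar * E * VMAX = pstar * L + pstar * δMIN * VMAX := by
      rw [hE, ← hx]; ring
    have h4 : D * VMAX ≤ pstar * E * VMAX := by rw [hx, h5]; linarith
    exact le_of_mul_le_mul_right h4 hVpos
  -- the dominating sequence
  set g : ℕ → ℝ := fun k => ((k0 : ℝ) * ΔMAX + k * D) / (t1 + k0 * ΔMAX + k * E)
    with hg
  have hgden : ∀ k : ℕ, 0 < t1 + (k0:ℝ) * ΔMAX + k * E := by
    intro k; positivity
  have hgt : Tendsto g atTop (nhds (D / E)) := by
    have h1 : Tendsto (fun k : ℕ => ((k0:ℝ) * ΔMAX) / k + D) atTop (nhds (0 + D)) :=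
      (tendsto_const_div_atTop_nhds_zero_nat _).add_const D
    have h2 : Tendsto (fun k : ℕ => (t1 + (k0:ℝ) * ΔMAX) / k + E) atTop (nhds (0 + E)) :=
      (tendsto_const_div_atTop_nhds_zero_nat _).add_const E
    rw [zero_add] at h1 h2
    have h3 := h1.div h2 (ne_of_gt hEpos)
    refine h3.congr' ?_
    filter_upwards [eventually_ge_atTop 1] with k hk
    have hk0' : (k:ℝ) ≠ 0 := by positivity
    rw [hg]
    simp only [Pi.div_apply]
    field_simp
  -- pointwise eventual bound
  have hbound : ∀ᶠ k in atTop,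
      (∑ i ∈ Finset.range k, Δ i) /
        (t1 + ∑ i ∈ Finset.range k, (Δ i + δ i)) ≤ g k := by
    filter_upwards [eventually_ge_atTop k0] with k hk
    set S : ℝ := ∑ i ∈ Finset.range k, Δ i with hS
    have hSpos : 0 ≤ S := Finset.sum_nonneg fun i _ => (hΔpos i).le
    have hSle : S ≤ (k0:ℝ) * ΔMAX + k * D := by
      have hsplit : S = (∑ i ∈ Finset.range k0, Δ i)
          + ∑ i ∈ Finset.Ico k0 k, Δ i := by
        rw [hS, ← Finset.sum_range_add_sum_Ico _ hk]
      have h1 : (∑ i ∈ Finset.range k0, Δ i) ≤ (k0:ℝ) * ΔMAX := by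
        calc (∑ i ∈ Finset.range k0, Δ i) ≤ ∑ i ∈ Finset.range k0, ΔMAX :=
              Finset.sum_le_sum fun i _ => hΔle i
          _ = (k0:ℝ) * ΔMAX := by simp [mul_comm]
      have h2 : (∑ i ∈ Finset.Ico k0 k, Δ i) = ((k:ℝ) - k0) * D := by
        rw [Finset.sum_congr rfl fun i hi => hΔeq i (Finset.mem_Ico.mp hi).1]
        simp [Nat.card_Ico, Nat.cast_sub hk, sub_mul]
      have h3 : ((k:ℝ) - k0) * D ≤ k * D := by
        have : (0:ℝ) ≤ k0 := by positivity
        nlinarith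
      linarith
    have hδsum : (k:ℝ) * δMIN ≤ ∑ i ∈ Finset.range k, δ i := by
      calc (k:ℝ) * δMIN = ∑ i ∈ Finset.range k, δMIN := by simp [mul_comm]
        _ ≤ _ := Finset.sum_le_sum fun i _ => hδ i
    have hden1 : t1 + ∑ i ∈ Finset.range k, (Δ i + δ i)
        = t1 + S + ∑ i ∈ Finset.range k, δ i := by
      rw [hS, Finset.sum_add_distrib]; ring
    have hdpos : 0 < t1 + S + (k:ℝ) * δMIN := by positivity
    have step1 : S / (t1 + ∑ i ∈ Finset.range k, (Δ i + δ i))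
        ≤ S / (t1 + S + (k:ℝ) * δMIN) := by
      apply div_le_div_of_nonneg_left hSpos hdpos
      rw [hden1]; linarith
    have step2 : S / (t1 + S + (k:ℝ) * δMIN)
        ≤ ((k0:ℝ) * ΔMAX + k * D) / (t1 + k0 * ΔMAX + k * E) := by
      rw [div_le_div_iff₀ hdpos (hgden k)]
      have hkD : (0:ℝ) ≤ (k:ℝ) * D := by positivity
      have hkd : (0:ℝ) ≤ (k:ℝ) * δMIN := by positivity
      have hkE : (k:ℝ) * E = (k:ℝ) * D + (k:ℝ) * δMIN := by rw [hE]; ring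
      nlinarith [mul_nonneg (sub_nonneg.mpr hSle) ht1.le,
        mul_nonneg (sub_nonneg.mpr hSle) hkd, hkE]
    exact step1.trans step2
  -- conclude
  have hcb : IsCoboundedUnder (· ≤ ·)
      atTop (fun k : ℕ =>
        (∑ i ∈ Finset.range k, Δ i) /
          (t1 + ∑ i ∈ Finset.range k, (Δ i + δ i))) := by
    apply IsBoundedUnder.isCoboundedUnder_le (u := fun k : ℕ =>
        (∑ i ∈ Finset.range k, Δ i) /
          (t1 + ∑ i ∈ Finset.range k, (Δ i + δ i)))
    apply isBoundedUnder_of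
    refine ⟨0, fun k => ?_⟩
    have h1 : 0 ≤ ∑ i ∈ Finset.range k, Δ i :=
      Finset.sum_nonneg fun i _ => (hΔpos i).le
    have h2 : 0 ≤ ∑ i ∈ Finset.range k, (Δ i + δ i) :=
      Finset.sum_nonneg fun i _ => by have := hδ i; have := hΔpos i; linarith
    positivity

  have hgb : IsBoundedUnder (· ≤ ·) atTop g := hgt.isBoundedUnder_le
  calc limsup _ atTop ≤ limsup g atTop := limsup_le_limsup hbound hcb hgb
    _ = D / E := hgt.limsup_eq
    _ ≤ pstar := hℓ
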